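/- For every x ∈ (0, 1/2], one has sin(πx) > (π·x(1−x)/2)·(2 + x(1−x)). -/

import Mathlib

open Real Set Filter Topology

/-- The digamma function `ψ(x) = Γ'(x)/Γ(x)`. -/
noncomputable def digamma (x : ℝ) : ℝ := deriv Real.Gamma x / Real.Gamma x

/-- The Ramanujan constant function `R(x) = -2γ - ψ(x) - ψ(1-x)`. -/
noncomputable def ramanujanR (x : ℝ) : ℝ :=
  -2 * Real.eulerMascheroniConstant - digamma x - digamma (1 - x)

/-- The Riemann zeta function as a real series `ζ(s) = Σ_{n=1}^∞ n^{-s}`. -/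
noncomputable def zetaR (s : ℝ) : ℝ := ∑' n : ℕ, 1 / ((n : ℝ) + 1) ^ s

/-- The generalized elliptic integral of the first kind
`K_a(r) = (π/2) Σ_{n=0}^∞ ((a)_n (1-a)_n / (n!)^2) r^(2n)`. -/
noncomputable def Ka (a r : ℝ) : ℝ :=
  Real.pi / 2 * ∑' n : ℕ,
    (Polynomial.eval a (ascPochhammer ℝ n) * Polynomial.eval (1 - a) (ascPochhammer ℝ n)
      / (Nat.factorial n : ℝ) ^ 2) * r ^ (2 * n)

/-- The generalized elliptic integral of the second kind
`E_a(r) = (π/2) Σ_{n=0}^∞ ((a-1)_n (1-a)_n / (n!)^2) r^(2n)`. -/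
noncomputable def Ea (a r : ℝ) : ℝ :=
  Real.pi / 2 * ∑' n : ℕ,
    (Polynomial.eval (a - 1) (ascPochhammer ℝ n) * Polynomial.eval (1 - a) (ascPochhammer ℝ n)
      / (Nat.factorial n : ℝ) ^ 2) * r ^ (2 * n)

lemma sin_gt_sub_cube6 {y : ℝ} (hy : 0 < y) : y - y ^ 3 / 6 < Real.sin y := by
  have key : StrictMonoOn (fun t : ℝ => Real.sin t - t + t ^ 3 / 6) (Set.Ici 0) := by
    apply strictMonoOn_of_deriv_pos (convex_Ici 0)
    · fun_prop
    · intro t ht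
      rw [interior_Ici] at ht
      have hd : HasDerivAt (fun t : ℝ => Real.sin t - t + t ^ 3 / 6)
          (Real.cos t - 1 + t ^ 2 / 2) t := by
        have h1 := (Real.hasDerivAt_sin t).sub (hasDerivAt_id t)
        have h2 := (hasDerivAt_pow 3 t).div_const 6
        exact (h1.add h2).congr_deriv (by simp; ring)
      rw [hd.deriv]
      have := Real.one_sub_sq_div_two_lt_cos (x := t) (ne_of_gt ht)
      linarith
  have h0 := key (Set.self_mem_Ici) (Set.mem_Ici.2 hy.le) hy
  simp at h0
  linarith

theorem stmt9 (x : ℝ) (hx : x ∈ Set.Ioc (0 : ℝ) (1/2)) :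
    Real.pi * x * (1 - x) / 2 * (2 + x * (1 - x)) < Real.sin (Real.pi * x) := by
  obtain ⟨hx0, hx2⟩ := hx
  have hπ : Real.pi < 3.15 := Real.pi_lt_d2
  have hπ0 : 0 < Real.pi := Real.pi_pos
  have hy : 0 < Real.pi * x := by positivity
  have h1 := sin_gt_sub_cube6 hy
  have hπ2 : Real.pi ^ 2 < 9.9225 := by nlinarith
  have h3 : 0 < 3 - 3.9225 * x - 3 * x ^ 2 := by
    nlinarith [mul_nonneg hx0.le (sub_nonneg.2 hx2)]
  have key : Real.pi * x * (1 - x) / 2 * (2 + x * (1 - x))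
      ≤ Real.pi * x - (Real.pi * x) ^ 3 / 6 := by
    nlinarith [mul_nonneg (mul_nonneg (mul_nonneg hπ0.le hx0.le)
        (mul_nonneg hx0.le hx0.le)) (sub_pos.2 hπ2).le,
      mul_pos (mul_pos hπ0 (mul_pos hx0 hx0)) h3]
  linarith
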